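/- Let d be a rational prime, m ≥ 2, n ≥ 1, and let c_0 be a root of the Misiurewicz polynomial G_{d,m,n}(c). Set K = ℚ(c_0) and a_n = f_{c_0,d}^n(0) ∈ O_K. Then a_n = G_{d,0,n}(c_0)·u for some unit u of O_K. -/

import Mathlib

open Polynomial

noncomputable section

/-- `critPoly d i` is `f_{c,d}^i(0)` as a polynomial in the variable `c` over `ℤ`,
where `f_{c,d}(x) = x^d + c`. -/
def critPoly (d : ℕ) : ℕ → Polynomial ℤ
  | 0 => 0
  | i + 1 => critPoly d i ^ d + X

/-- The field of rational functions in `c` over `ℚ`, realized as the fraction field of `ℤ[c]`. -/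
abbrev RF : Type := FractionRing (Polynomial ℤ)

/-- The natural inclusion `ℤ[c] → ℚ(c)`. -/
def toRF (p : Polynomial ℤ) : RF := algebraMap (Polynomial ℤ) RF p

/-- `G_{d,0,n} = ∏_{k ∣ n} (f_{c,d}^k(0))^{μ(n/k)}` as a rational function. -/
def G0Rat (d n : ℕ) : RF :=
  ∏ k ∈ n.divisors, toRF (critPoly d k) ^ (ArithmeticFunction.moebius (n / k))

/-- `F_{d,m,n}` as a rational function. -/
def FRat (d m n : ℕ) : RF :=
  ∏ k ∈ n.divisors,
    ((toRF (critPoly d (m + k)) - toRF (critPoly d m)) /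
      (toRF (critPoly d (m - 1 + k)) - toRF (critPoly d (m - 1)))) ^
      (ArithmeticFunction.moebius (n / k))

/-- `G_{d,m,n}` (for `m ≥ 2`) as a rational function. -/
def GRat (d m n : ℕ) : RF :=
  if n ∣ m - 1 then FRat d m n / FRat d 1 n else FRat d m n

/-- `G : ℤ[c]` is the Misiurewicz polynomial `G_{d,m,n}` (for `m ≥ 2`). -/
def IsMisiurewicz (d m n : ℕ) (G : Polynomial ℤ) : Prop := toRF G = GRat d m n

/-- `G0 : ℤ[c]` is the polynomial `G_{d,0,n}`. -/
def IsG0 (d n : ℕ) (G0 : Polynomial ℤ) : Prop := toRF G0 = G0Rat d n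

namespace MisAux

variable {d : ℕ}

lemma critPoly_zero : critPoly d 0 = 0 := rfl
lemma critPoly_succ (i : ℕ) : critPoly d (i+1) = critPoly d i ^ d + X := rfl

lemma critPoly_monic_deg (hd : 2 ≤ d) : ∀ k : ℕ,
    (critPoly d (k+1)).Monic ∧ (critPoly d (k+1)).natDegree = d ^ k := by
  intro k
  induction k with
  | zero =>
    have h : critPoly d 1 = X := by
      rw [critPoly_succ, critPoly_zero, zero_pow (by omega), zero_add]
    rw [h]; exact ⟨monic_X, natDegree_X⟩
  | succ k ih =>
    obtain ⟨hm, hdeg⟩ := ih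
    have hpow : (critPoly d (k+1) ^ d).Monic := hm.pow d
    have hpow0 : (critPoly d (k+1) ^ d) ≠ 0 := hpow.ne_zero
    have hdegpow : (critPoly d (k+1) ^ d).natDegree = d ^ (k+1) := by
      rw [natDegree_pow, hdeg]; ring
    have hlt : (X : Polynomial ℤ).degree < (critPoly d (k+1) ^ d).degree := by
      rw [degree_X, degree_eq_natDegree hpow0, hdegpow]
      exact_mod_cast Nat.one_lt_cast.mpr (by
        calc 1 < 2 := one_lt_two
        _ ≤ d := hd
        _ = d ^ 1 := (pow_one d).symm
        _ ≤ d ^ (k+1) := Nat.pow_le_pow_right (by omega) (by omega))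
    refine ⟨?_, ?_⟩
    · rw [critPoly_succ]; exact hpow.add_of_left hlt
    · rw [critPoly_succ, natDegree_add_eq_left_of_degree_lt hlt, hdegpow]

lemma critPoly_ne_zero (hd : 2 ≤ d) {k : ℕ} (hk : 1 ≤ k) : critPoly d k ≠ 0 := by
  obtain ⟨j, rfl⟩ := Nat.exists_eq_add_of_le hk
  rw [Nat.add_comm]
  exact ((critPoly_monic_deg hd j).1).ne_zero

lemma critPoly_diff_ne_zero (hd : 2 ≤ d) (s : ℕ) {e : ℕ} (he : 1 ≤ e) :
    critPoly d (s + e) - critPoly d s ≠ 0 := by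
  rcases Nat.eq_zero_or_pos s with rfl | hs
  · rw [critPoly_zero, sub_zero, Nat.zero_add]
    exact critPoly_ne_zero hd he
  · intro h
    have heq : critPoly d (s + e) = critPoly d s := sub_eq_zero.mp h
    obtain ⟨s', rfl⟩ := Nat.exists_eq_add_of_le hs
    have h1 := (critPoly_monic_deg hd (s' + e)).2
    have h2 := (critPoly_monic_deg hd s').2
    have : (1 + s' + e) = (s' + e) + 1 := by ring
    rw [this] at heq
    have : (1 + s') = s' + 1 := by ring
    rw [this] at heq
    have : d ^ (s' + e) = d ^ s' := by rw [← h1, ← h2, heq]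
    have := Nat.pow_right_injective hd this
    omega

/-- the cofactor in `x^d - y^d = (x-y) * cfac`. -/
def cfac (d e i : ℕ) : Polynomial ℤ :=
  ∑ r ∈ Finset.range d, critPoly d (i + e) ^ r * critPoly d i ^ (d - 1 - r)

lemma critPoly_diff_step (e i : ℕ) :
    critPoly d (i + 1 + e) - critPoly d (i + 1)
      = (critPoly d (i + e) - critPoly d i) * cfac d e i := by
  have h1 : i + 1 + e = (i + e) + 1 := by ring
  rw [h1, critPoly_succ, critPoly_succ]
  have := geom_sum₂_mul (critPoly d (i + e)) (critPoly d i) d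
  rw [cfac, mul_comm]
  rw [this]
  ring

lemma critPoly_diff_chain (e s : ℕ) : ∀ t : ℕ,
    critPoly d (s + t + e) - critPoly d (s + t)
      = (critPoly d (s + e) - critPoly d s) * ∏ i ∈ Finset.range t, cfac d e (s + i) := by
  intro t
  induction t with
  | zero => simp
  | succ t ih =>
    have h1 : s + (t+1) = (s + t) + 1 := by ring
    rw [h1, critPoly_diff_step e (s+t), ih, Finset.prod_range_succ, mul_assoc]

/-- The telescoping sum `Σ_{t<q} Π_{i<e*t} cfac (s+i)`. -/
def Sig (d e s q : ℕ) : Polynomial ℤ :=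
  ∑ t ∈ Finset.range q, ∏ i ∈ Finset.range (e * t), cfac d e (s + i)

lemma Sig_succ (e s q : ℕ) :
    Sig d e s (q+1) = Sig d e s q + ∏ i ∈ Finset.range (e * q), cfac d e (s + i) := by
  rw [Sig, Sig, Finset.sum_range_succ]

lemma critPoly_telescope (e s : ℕ) : ∀ q : ℕ,
    critPoly d (s + e * q) - critPoly d s
      = (critPoly d (s + e) - critPoly d s) * Sig d e s q := by
  intro q
  induction q with
  | zero => simp [Sig]
  | succ q ih =>
    have h1 : s + e * (q+1) = (s + e * q) + e := by ring
    have h2 : critPoly d (s + e * q + e) - critPoly d s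
        = (critPoly d (s + e*q + e) - critPoly d (s + e*q))
          + (critPoly d (s + e*q) - critPoly d s) := by ring
    rw [h1, h2, critPoly_diff_chain e s (e*q), ih, Sig_succ, mul_add, add_comm]

/-- divisibility: `critPoly e ∣ critPoly (e+t) - critPoly t`. -/
lemma critPoly_dvd_diff (e : ℕ) : ∀ t : ℕ, critPoly d e ∣ critPoly d (e + t) - critPoly d t := by
  intro t
  induction t with
  | zero =>
    rw [Nat.add_zero, critPoly_zero, sub_zero]
  | succ t ih =>
    have h1 : e + (t+1) = (e + t) + 1 := by ring
    rw [h1, critPoly_succ, critPoly_succ]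
    have h2 : critPoly d (e+t) ^ d + X - (critPoly d t ^ d + X)
        = critPoly d (e+t) ^ d - critPoly d t ^ d := by ring
    rw [h2]
    exact ih.trans (sub_dvd_pow_sub_pow _ _ d)

lemma critPoly_dvd_mul (e : ℕ) : ∀ t : ℕ, critPoly d e ∣ critPoly d (e * t) := by
  intro t
  induction t with
  | zero => rw [Nat.mul_zero, critPoly_zero]; exact dvd_zero _
  | succ t ih =>
    have h1 : e * (t+1) = e + e * t := by ring
    rw [h1]
    have := critPoly_dvd_diff (d := d) e (e * t)
    have h2 : critPoly d (e + e*t) = (critPoly d (e + e*t) - critPoly d (e*t)) + critPoly d (e*t) := by ring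
    rw [h2]
    exact dvd_add this ih

section RingSide
variable {R : Type*} [CommRing R] [IsDomain R] {d : ℕ} (c : R)

/-- the critical orbit in `R`. -/
def av (d : ℕ) (c : R) (i : ℕ) : R := aeval c (critPoly d i)

lemma av_def (i : ℕ) : av d c i = aeval c (critPoly d i) := rfl

lemma av_zero : av d c 0 = 0 := by simp [av, critPoly_zero]

lemma av_succ (i : ℕ) : av d c (i+1) = av d c i ^ d + c := by
  simp [av, critPoly_succ]

lemma av_const {x y : ℕ} (h : av d c x = av d c y) (t : ℕ) :
    av d c (x + t) = av d c (y + t) := by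
  induction t with
  | zero => simpa using h
  | succ t ih =>
    have h1 : x + (t+1) = (x+t)+1 := by ring
    have h2 : y + (t+1) = (y+t)+1 := by ring
    rw [h1, h2, av_succ, av_succ, ih]

lemma av_prop {s p : ℕ} (h : av d c (s + p) = av d c s) :
    ∀ i, s ≤ i → av d c (i + p) = av d c i := by
  intro i hi
  obtain ⟨t, rfl⟩ := Nat.exists_eq_add_of_le hi
  have := av_const c h t
  have h1 : s + p + t = s + t + p := by ring
  rw [h1] at this
  exact this

lemma av_prop_mult {s p : ℕ} (h : av d c (s + p) = av d c s) :
    ∀ t, av d c (s + p * t) = av d c s := by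
  intro t
  induction t with
  | zero => simp
  | succ t ih =>
    have h1 : s + p * (t+1) = (s + p * t) + p := by ring
    rw [h1, av_prop c h _ (Nat.le_add_right _ _), ih]

lemma av_dvd_diff (e t : ℕ) : av d c e ∣ av d c (e + t) - av d c t := by
  have := critPoly_dvd_diff (d := d) e t
  have h2 := map_dvd (aeval c) this
  rw [map_sub] at h2
  exact h2

lemma av_dvd_mul (e t : ℕ) : av d c e ∣ av d c (e * t) :=
  map_dvd (aeval c) (critPoly_dvd_mul e t)

variable {P : Ideal R}

lemma av_mem_of_dvd {e i : ℕ} (he : av d c e ∈ P) (hei : e ∣ i) : av d c i ∈ P := by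
  obtain ⟨t, rfl⟩ := hei
  obtain ⟨w, hw⟩ := av_dvd_mul c e t
  rw [hw]; exact P.mul_mem_right _ he

lemma sig_sub_one_mem (hd : 2 ≤ d) {e : ℕ} (he1 : 1 ≤ e) (he : av d c e ∈ P)
    {q : ℕ} (hq : 1 ≤ q) (s : ℕ) :
    aeval c (Sig d e s q) - 1 ∈ P := by
  obtain ⟨q', rfl⟩ := Nat.exists_eq_add_of_le hq
  rw [Sig]
  rw [map_sum]
  rw [Nat.add_comm 1 q', Finset.sum_range_succ']
  have h0 : (aeval c) (∏ i ∈ Finset.range (e * 0), cfac d e (s + i)) = 1 := by simp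
  rw [h0, add_sub_cancel_right]
  apply Ideal.sum_mem
  intro t _
  rw [map_prod]
  -- the index i₀ with e ∣ s + i₀
  set i₀ : ℕ := (e - s % e) % e with hi₀
  have hi₀lt : i₀ < e := Nat.mod_lt _ (by omega)
  have hdvd : e ∣ s + i₀ := by
    rcases Nat.eq_zero_or_pos (s % e) with h | h
    · have : i₀ = 0 := by
        rw [hi₀, h, Nat.sub_zero, Nat.mod_self]
      rw [this, Nat.add_zero]
      exact Nat.dvd_of_mod_eq_zero h
    · have hlt : s % e < e := Nat.mod_lt _ (by omega)
      have : i₀ = e - s % e := by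
        rw [hi₀]; exact Nat.mod_eq_of_lt (by omega)
      rw [this]
      have hmod := Nat.div_add_mod s e
      refine ⟨s / e + 1, ?_⟩
      rw [Nat.mul_succ]
      omega
  have hmem : (aeval c) (cfac d e (s + i₀)) ∈ P := by
    rw [cfac, map_sum]
    apply Ideal.sum_mem
    intro r _
    rw [map_mul, map_pow, map_pow]
    rcases Nat.eq_zero_or_pos r with rfl | hr
    · apply P.mul_mem_left
      have : av d c (s + i₀) ∈ P := av_mem_of_dvd c he hdvd
      exact Ideal.pow_mem_of_mem P this _ (by omega)
    · apply P.mul_mem_right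
      have : av d c (s + i₀ + e) ∈ P := av_mem_of_dvd c he (by
        obtain ⟨w, hw⟩ := hdvd; exact ⟨w + 1, by rw [Nat.mul_succ]; omega⟩)
      exact Ideal.pow_mem_of_mem P this _ hr
  have hidx : i₀ ∈ Finset.range (e * (t + 1)) := by
    apply Finset.mem_range.mpr
    calc i₀ < e := hi₀lt
    _ ≤ e * (t+1) := Nat.le_mul_of_pos_right _ (by omega)
  have := Finset.dvd_prod_of_mem (fun i => (aeval c) (cfac d e (s + i))) hidx
  obtain ⟨w, hw⟩ := this
  rw [hw]
  exact P.mul_mem_right _ hmem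

lemma sig_not_mem (hP : P ≠ ⊤) (hd : 2 ≤ d) {e : ℕ} (he1 : 1 ≤ e) (he : av d c e ∈ P)
    {q : ℕ} (hq : 1 ≤ q) (s : ℕ) :
    aeval c (Sig d e s q) ∉ P := by
  intro hmem
  have h1 := sig_sub_one_mem c hd he1 he hq s
  have : (1 : R) ∈ P := by
    have := P.sub_mem hmem h1
    simpa using this
  exact hP (P.eq_top_of_isUnit_mem this isUnit_one)

/-- From a period `j` at `s` and `av e ∈ P`, deduce period `e` at `s`. -/
lemma av_period_descend (hP : P ≠ ⊤) (hd : 2 ≤ d) {e : ℕ} (he1 : 1 ≤ e) (he : av d c e ∈ P)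
    {s j : ℕ} (hj : 1 ≤ j) (h : av d c (s + j) = av d c s) :
    av d c (s + e) = av d c s := by
  have htel := critPoly_telescope (d := d) e s j
  have h2 := congrArg (aeval c) htel
  rw [map_sub, map_mul, map_sub] at h2
  simp only [← av_def] at h2
  have hmult : av d c (s + e * j) = av d c s := by
    have := av_prop_mult c h e
    rw [Nat.mul_comm]
    exact this
  have hz : (0 : R) = (av d c (s+e) - av d c s) * aeval c (Sig d e s j) := by
    have : av d c (s + e*j) - av d c s = 0 := by rw [hmult]; ring
    rw [← this]
    exact h2
  have hsig : aeval c (Sig d e s j) ≠ 0 := by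
    intro h0
    exact sig_not_mem c hP hd he1 he hj s (h0 ▸ P.zero_mem)
  rcases mul_eq_zero.mp hz.symm with h' | h'
  · have := sub_eq_zero.mp h'; exact this
  · exact absurd h' hsig

section Exactness

variable {M E : ℕ}

lemma perE (hME : av d c (M + E) = av d c M) :
    ∀ i, M ≤ i → av d c (i + E) = av d c i :=
  fun i hi => av_prop c hME i hi

lemma perE_mult (hME : av d c (M + E) = av d c M) : ∀ t, ∀ i, M ≤ i → av d c (i + E * t) = av d c i := by
  intro t
  induction t with
  | zero => intro i _; simp
  | succ t ih =>
    intro i hi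
    have h1 : i + E * (t+1) = (i + E * t) + E := by ring
    rw [h1, perE c hME _ (le_trans hi (Nat.le_add_right _ _)), ih i hi]

lemma av_reduc (hME : av d c (M + E) = av d c M) (hE1 : 1 ≤ E) : ∀ i, M ≤ i → av d c i = av d c (M + (i - M) % E) := by
  intro i hi
  obtain ⟨x, rfl⟩ := Nat.exists_eq_add_of_le hi
  have e5 : M + x - M = x := by omega
  rw [e5]
  have hx : M + x = (M + x % E) + E * (x / E) := by
    have := Nat.div_add_mod x E; rw [Nat.add_assoc]; omega
  rw [hx]
  exact perE_mult c hME (x / E) _ (Nat.le_add_right _ _)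

lemma av_distinct (hME : av d c (M + E) = av d c M)
    (hEmin : ∀ p, 1 ≤ p → av d c (M + p) = av d c M → E ≤ p)
    {u u' : ℕ} (hu : u < u') (hu' : u' < E) :
    av d c (M + u) ≠ av d c (M + u') := by
  intro h
  have h2 := av_const c h (E - u')
  have e1 : M + u' + (E - u') = M + E := by omega
  rw [e1, hME] at h2
  -- h2 : av (M + u + (E - u')) = av M
  have e2 : M + u + (E - u') = M + (u + (E - u')) := by ring
  rw [e2] at h2
  have := hEmin (u + (E - u')) (by omega) h2
  omega

lemma av_period_dvd (hME : av d c (M + E) = av d c M) (hE1 : 1 ≤ E)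
    (hEmin : ∀ p, 1 ≤ p → av d c (M + p) = av d c M → E ≤ p) : ∀ s p, M ≤ s → 1 ≤ p → av d c (s + p) = av d c s → E ∣ p := by
  intro s p hs hp h
  have h1 := av_reduc c hME hE1 s hs
  have h2 := av_reduc c hME hE1 (s + p) (le_trans hs (Nat.le_add_right _ _))
  rw [h, h1] at h2
  have hu : (s - M) % E < E := Nat.mod_lt _ (by omega)
  have hu' : (s + p - M) % E < E := Nat.mod_lt _ (by omega)
  have heq : (s - M) % E = (s + p - M) % E := by
    by_contra hne
    rcases Nat.lt_or_ge ((s - M) % E) ((s + p - M) % E) with hlt | hge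
    · exact av_distinct c hME hEmin hlt hu' h2
    · have hlt2 : (s + p - M) % E < (s - M) % E := by omega
      exact av_distinct c hME hEmin hlt2 hu h2.symm
  -- conclude E ∣ p
  obtain ⟨x, rfl⟩ := Nat.exists_eq_add_of_le hs
  have e3 : M + x - M = x := by omega
  have e4 : M + x + p - M = x + p := by omega
  rw [e3, e4] at heq
  have hme : x + p ≡ x + 0 [MOD E] := by
    rw [Nat.add_zero]; exact heq.symm
  have hmod : p ≡ 0 [MOD E] := Nat.ModEq.add_left_cancel' x hme
  exact (Nat.modEq_zero_iff_dvd).mp hmod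

end Exactness
end RingSide
section Valuation

variable {K : Type*} [Field K] [CharZero K] (x : K)

/-- order of vanishing at `x` of an integer polynomial. -/
def vz (x : K) (p : Polynomial ℤ) : ℕ :=
  rootMultiplicity x (p.map (Int.castRingHom K))

lemma mapK_injective : Function.Injective
    (Polynomial.map (Int.castRingHom K) : Polynomial ℤ → Polynomial K) :=
  Polynomial.map_injective _ Int.cast_injective

lemma mapK_ne_zero {p : Polynomial ℤ} (hp : p ≠ 0) :
    p.map (Int.castRingHom K) ≠ 0 := by
  intro h
  exact hp (mapK_injective (by simpa using h))

lemma vz_mul {p q : Polynomial ℤ} (hp : p ≠ 0) (hq : q ≠ 0) :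
    vz x (p * q) = vz x p + vz x q := by
  rw [vz, Polynomial.map_mul]
  exact rootMultiplicity_mul (mul_ne_zero (mapK_ne_zero hp) (mapK_ne_zero hq))

lemma vz_pos_iff {p : Polynomial ℤ} (hp : p ≠ 0) :
    0 < vz x p ↔ aeval x p = 0 := by
  rw [vz, rootMultiplicity_pos (mapK_ne_zero hp)]
  rw [IsRoot.def, eval_map, aeval_def]
  constructor
  · intro h; rw [algebraMap_int_eq]; exact h
  · intro h; rw [← algebraMap_int_eq]; exact h

lemma vz_eq_zero {p : Polynomial ℤ} (hp : p ≠ 0) (h : aeval x p ≠ 0) :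
    vz x p = 0 := by
  by_contra h'
  exact h ((vz_pos_iff x hp).mp (by omega))

lemma vz_one : vz x 1 = 0 := by
  apply vz_eq_zero x one_ne_zero
  simp

end Valuation

section VRF

variable {K : Type*} [Field K] [CharZero K] (x : K)

lemma toRF_injective : Function.Injective toRF :=
  IsFractionRing.injective (Polynomial ℤ) RF

lemma toRF_ne_zero {p : Polynomial ℤ} (hp : p ≠ 0) : toRF p ≠ 0 := by
  intro h
  exact hp (toRF_injective (by rw [h]; exact (map_zero (algebraMap (Polynomial ℤ) RF)).symm))

lemma toRF_mul (p q : Polynomial ℤ) : toRF (p * q) = toRF p * toRF q :=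
  map_mul (algebraMap (Polynomial ℤ) RF) p q

lemma algMap_eq : ⇑(algebraMap (Polynomial ℤ) RF) = toRF := rfl

lemma toRF_zero : toRF 0 = 0 := map_zero (algebraMap (Polynomial ℤ) RF)

lemma toRF_one : toRF 1 = 1 := map_one (algebraMap (Polynomial ℤ) RF)

/-- extension of `vz` to the rational function field. -/
def vRF (x : K) (ξ : RF) : ℤ :=
  (vz x (IsLocalization.surj (nonZeroDivisors (Polynomial ℤ)) ξ).choose.1 : ℤ)
    - vz x ((IsLocalization.surj (nonZeroDivisors (Polynomial ℤ)) ξ).choose.2 : Polynomial ℤ)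

lemma vRF_eq {ξ : RF} (hξ : ξ ≠ 0) {p q : Polynomial ℤ} (hq : q ≠ 0)
    (h : ξ * toRF q = toRF p) :
    vRF x ξ = (vz x p : ℤ) - vz x q := by
  have hr := (IsLocalization.surj (nonZeroDivisors (Polynomial ℤ)) ξ).choose_spec
  set r := (IsLocalization.surj (nonZeroDivisors (Polynomial ℤ)) ξ).choose with hrdef
  rw [algMap_eq] at hr
  have hq0 : (r.2 : Polynomial ℤ) ≠ 0 := nonZeroDivisors.ne_zero r.2.2
  have hp0 : p ≠ 0 := by
    intro h0
    rw [h0, toRF_zero] at h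
    exact (mul_ne_zero hξ (toRF_ne_zero hq)) h
  have hr0 : r.1 ≠ 0 := by
    intro h0
    rw [h0, toRF_zero] at hr
    exact (mul_ne_zero hξ (toRF_ne_zero hq0)) hr
  have hcross : p * (r.2 : Polynomial ℤ) = r.1 * q := by
    apply toRF_injective
    rw [toRF_mul, toRF_mul, ← h, ← hr]
    ring
  have := congrArg (fun y => (vz x y : ℤ)) hcross
  simp only [vz_mul x hp0 hq0, vz_mul x hr0 hq] at this
  push_cast at this
  rw [vRF, ← hrdef]
  omega

lemma vRF_toRF {p : Polynomial ℤ} (hp : p ≠ 0) : vRF x (toRF p) = vz x p := by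
  have h : toRF p * toRF 1 = toRF p := by rw [toRF_one, mul_one]
  rw [vRF_eq x (toRF_ne_zero hp) one_ne_zero h, vz_one]
  omega

lemma vRF_mul {ξ η : RF} (hξ : ξ ≠ 0) (hη : η ≠ 0) :
    vRF x (ξ * η) = vRF x ξ + vRF x η := by
  obtain ⟨⟨p1, q1⟩, h1⟩ := IsLocalization.surj (nonZeroDivisors (Polynomial ℤ)) ξ
  obtain ⟨⟨p2, q2⟩, h2⟩ := IsLocalization.surj (nonZeroDivisors (Polynomial ℤ)) η
  rw [algMap_eq] at h1 h2
  simp only at h1 h2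
  have hq1 : (q1 : Polynomial ℤ) ≠ 0 := nonZeroDivisors.ne_zero q1.2
  have hq2 : (q2 : Polynomial ℤ) ≠ 0 := nonZeroDivisors.ne_zero q2.2
  have hp1 : p1 ≠ 0 := by
    intro h0; rw [h0, toRF_zero] at h1
    exact (mul_ne_zero hξ (toRF_ne_zero hq1)) h1
  have hp2 : p2 ≠ 0 := by
    intro h0; rw [h0, toRF_zero] at h2
    exact (mul_ne_zero hη (toRF_ne_zero hq2)) h2
  have h3 : (ξ * η) * toRF ((q1 : Polynomial ℤ) * q2) = toRF (p1 * p2) := by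
    rw [toRF_mul, toRF_mul]
    calc ξ * η * (toRF (q1:Polynomial ℤ) * toRF (q2:Polynomial ℤ))
        = (ξ * toRF (q1:Polynomial ℤ)) * (η * toRF (q2:Polynomial ℤ)) := by ring
    _ = toRF p1 * toRF p2 := by rw [h1, h2]
  rw [vRF_eq x (mul_ne_zero hξ hη) (mul_ne_zero hq1 hq2) h3,
    vRF_eq x hξ hq1 h1, vRF_eq x hη hq2 h2,
    vz_mul x hp1 hp2, vz_mul x hq1 hq2]
  push_cast
  ring

lemma vRF_one : vRF x 1 = 0 := by
  have h1 := vRF_toRF x (one_ne_zero (α := Polynomial ℤ))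
  rw [toRF_one] at h1
  rw [h1, vz_one]
  rfl

lemma vRF_inv {ξ : RF} (hξ : ξ ≠ 0) : vRF x ξ⁻¹ = - vRF x ξ := by
  have h := vRF_mul x hξ (inv_ne_zero hξ)
  rw [mul_inv_cancel₀ hξ, vRF_one] at h
  omega

lemma vRF_pow {ξ : RF} (hξ : ξ ≠ 0) (k : ℕ) : vRF x (ξ ^ k) = k * vRF x ξ := by
  induction k with
  | zero => simpa using vRF_one x
  | succ k ih =>
    rw [pow_succ, vRF_mul x (pow_ne_zero _ hξ) hξ, ih]
    push_cast
    ring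

lemma vRF_zpow {ξ : RF} (hξ : ξ ≠ 0) (z : ℤ) : vRF x (ξ ^ z) = z * vRF x ξ := by
  cases z with
  | ofNat k => rw [Int.ofNat_eq_coe, zpow_natCast, vRF_pow x hξ]
  | negSucc k =>
    rw [zpow_negSucc, vRF_inv x (pow_ne_zero _ hξ), vRF_pow x hξ, Int.negSucc_eq]
    push_cast
    ring

lemma vRF_div {ξ η : RF} (hξ : ξ ≠ 0) (hη : η ≠ 0) :
    vRF x (ξ / η) = vRF x ξ - vRF x η := by
  rw [div_eq_mul_inv, vRF_mul x hξ (inv_ne_zero hη), vRF_inv x hη]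
  ring

lemma vRF_prod {ι : Type*} (s : Finset ι) (f : ι → RF) (hf : ∀ i ∈ s, f i ≠ 0) :
    vRF x (∏ i ∈ s, f i) = ∑ i ∈ s, vRF x (f i) := by
  classical
  induction s using Finset.induction_on with
  | empty => simpa using vRF_one x
  | insert a s' hnot ih =>
    rw [Finset.prod_insert hnot, Finset.sum_insert hnot,
      vRF_mul x (hf a (Finset.mem_insert_self a s'))
        (Finset.prod_ne_zero_iff.mpr (fun i hi => hf i (Finset.mem_insert_of_mem hi))),
      ih (fun i hi => hf i (Finset.mem_insert_of_mem hi))]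

end VRF

section Moebius

open ArithmeticFunction

/-- sum of the Möbius function over divisors of `N` is zero unless `N = 1`. -/
lemma moebius_divisor_sum (N : ℕ) :
    ∑ k ∈ N.divisors, ArithmeticFunction.moebius k = if N = 1 then 1 else 0 := by
  have h := congrArg (fun f : ArithmeticFunction ℤ => f N)
    ArithmeticFunction.moebius_mul_coe_zeta
  simp only [ArithmeticFunction.coe_mul_zeta_apply, ArithmeticFunction.one_apply] at h
  exact h

/-- key Möbius cancellation over the divisors that are multiples of a proper divisor `e`. -/
lemma moebius_filter_sum {n e : ℕ} (hn : 1 ≤ n) (he : e ∣ n) (hne : e ≠ n) :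
    ∑ k ∈ n.divisors.filter (fun k => e ∣ k), ArithmeticFunction.moebius (n / k) = 0 := by
  have he1 : 0 < e := by
    rcases Nat.eq_zero_or_pos e with rfl | h
    · have := zero_dvd_iff.mp he; omega
    · exact h
  have hnez : n ≠ 0 := by omega
  have hbij : ∑ k ∈ n.divisors.filter (fun k => e ∣ k), ArithmeticFunction.moebius (n / k)
      = ∑ r ∈ (n / e).divisors, ArithmeticFunction.moebius ((n / e) / r) := by
    apply Finset.sum_nbij' (fun k => k / e) (fun r => e * r)
    · intro a ha
      obtain ⟨ha1, ha2⟩ := Finset.mem_filter.mp ha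
      obtain ⟨u, hu⟩ := (Nat.mem_divisors.mp ha1).1
      obtain ⟨t, rfl⟩ := ha2
      rw [Nat.mem_divisors]
      constructor
      · refine ⟨u, ?_⟩
        rw [Nat.mul_div_cancel_left t he1, hu, mul_assoc, Nat.mul_div_cancel_left _ he1]
      · have : 0 < n / e := Nat.div_pos (Nat.le_of_dvd (by omega) he) he1
        omega
    · intro r hr
      obtain ⟨hr1, hr2⟩ := Nat.mem_divisors.mp hr
      obtain ⟨u, hu⟩ := hr1
      refine Finset.mem_filter.mpr ⟨Nat.mem_divisors.mpr ⟨⟨u, ?_⟩, hnez⟩, dvd_mul_right e r⟩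
      calc n = e * (n / e) := (Nat.mul_div_cancel' he).symm
      _ = e * (r * u) := by rw [hu]
      _ = e * r * u := by ring
    · intro a ha
      exact Nat.mul_div_cancel' (Finset.mem_filter.mp ha).2
    · intro r _
      exact Nat.mul_div_cancel_left _ he1
    · intro a ha
      obtain ⟨ha1, ha2⟩ := Finset.mem_filter.mp ha
      obtain ⟨t, rfl⟩ := ha2
      congr 1
      rw [Nat.mul_div_cancel_left t he1, Nat.div_div_eq_div_mul]
  rw [hbij, Nat.sum_div_divisors, moebius_divisor_sum]
  have hne1 : n / e ≠ 1 := by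
    intro h1
    exact hne (Nat.eq_of_dvd_of_div_eq_one he h1)
  simp [hne1]

/-- abstract Möbius cancellation for an `e`-periodic weight. -/
lemma Tsum_zero {n e : ℕ} (hn : 1 ≤ n) (he : e ∣ n) (hne : e ≠ n) (A : ℤ) (w : ℕ → ℤ)
    (hw : ∀ k ∈ n.divisors, w k = if e ∣ k then A else 0) :
    ∑ k ∈ n.divisors, (ArithmeticFunction.moebius (n / k)) * w k = 0 := by
  classical
  have h1 : ∑ k ∈ n.divisors, (ArithmeticFunction.moebius (n / k)) * w k
      = ∑ k ∈ n.divisors, (if e ∣ k then (ArithmeticFunction.moebius (n / k)) * A else 0) := by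
    apply Finset.sum_congr rfl
    intro k hk
    rw [hw k hk]
    by_cases h : e ∣ k <;> simp [h]
  rw [h1, Finset.sum_ite, Finset.sum_const_zero, add_zero, ← Finset.sum_mul,
    moebius_filter_sum hn he hne, zero_mul]

end Moebius

section FRatVal

variable {K : Type*} [Field K] [CharZero K] (x : K)

lemma toRF_sub (p q : Polynomial ℤ) : toRF (p - q) = toRF p - toRF q :=
  map_sub (algebraMap (Polynomial ℤ) RF) p q

/-- `Wv x d s j` : order of vanishing at `x` of `critPoly d (s+j) - critPoly d s`. -/
def Wv (x : K) (d s j : ℕ) : ℕ := vz x (critPoly d (s + j) - critPoly d s)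

/-- `Tv` : the Möbius-weighted sum of the `Wv`. -/
def Tv (x : K) (d n s : ℕ) : ℤ :=
  ∑ k ∈ n.divisors, (ArithmeticFunction.moebius (n / k)) * (Wv x d s k : ℤ)

lemma FRat_factor_ne_zero {d m n : ℕ} (hd2 : 2 ≤ d) (hm : 1 ≤ m) {k : ℕ} (hk : 1 ≤ k) :
    (toRF (critPoly d (m + k)) - toRF (critPoly d m)) /
      (toRF (critPoly d (m - 1 + k)) - toRF (critPoly d (m - 1))) ≠ 0 := by
  rw [← toRF_sub, ← toRF_sub]
  apply div_ne_zero
  · exact toRF_ne_zero (critPoly_diff_ne_zero hd2 m hk)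
  · exact toRF_ne_zero (critPoly_diff_ne_zero hd2 (m-1) hk)

lemma FRat_ne_zero {d m n : ℕ} (hd2 : 2 ≤ d) (hm : 1 ≤ m) : FRat d m n ≠ 0 := by
  rw [FRat]
  apply Finset.prod_ne_zero_iff.mpr
  intro k hk
  have hk1 : 1 ≤ k := Nat.pos_of_mem_divisors hk
  exact zpow_ne_zero _ (FRat_factor_ne_zero (n := n) hd2 hm hk1)

lemma GRat_ne_zero {d m n : ℕ} (hd2 : 2 ≤ d) (hm : 2 ≤ m) : GRat d m n ≠ 0 := by
  rw [GRat]
  split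
  · exact div_ne_zero (FRat_ne_zero hd2 (by omega)) (FRat_ne_zero hd2 (by omega))
  · exact FRat_ne_zero hd2 (by omega)

lemma vRF_FRat {d m n : ℕ} (hd2 : 2 ≤ d) (hm : 1 ≤ m) :
    vRF x (FRat d m n) = Tv x d n m - Tv x d n (m - 1) := by
  rw [FRat, vRF_prod x _ _ (fun k hk =>
    zpow_ne_zero _ (FRat_factor_ne_zero (n := n) hd2 hm (Nat.pos_of_mem_divisors hk))),
    Tv, Tv, ← Finset.sum_sub_distrib]
  apply Finset.sum_congr rfl
  intro k hk
  have hk1 : 1 ≤ k := Nat.pos_of_mem_divisors hk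
  have hnum : critPoly d (m + k) - critPoly d m ≠ 0 := critPoly_diff_ne_zero hd2 m hk1
  have hden : critPoly d (m - 1 + k) - critPoly d (m - 1) ≠ 0 :=
    critPoly_diff_ne_zero hd2 (m-1) hk1
  rw [vRF_zpow x (FRat_factor_ne_zero (n := n) hd2 hm hk1), ← toRF_sub, ← toRF_sub,
    vRF_div x (toRF_ne_zero hnum) (toRF_ne_zero hden),
    vRF_toRF x hnum, vRF_toRF x hden]
  rw [Wv, Wv]
  ring

lemma vz_G_formula {d m n : ℕ} (hd2 : 2 ≤ d) (hm : 2 ≤ m) {G : Polynomial ℤ}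
    (hG : toRF G = GRat d m n) :
    (vz x G : ℤ) = (Tv x d n m - Tv x d n (m-1))
      - (if n ∣ m - 1 then Tv x d n 1 - Tv x d n 0 else 0) := by
  have hGne : G ≠ 0 := by
    intro h0
    rw [h0, toRF_zero] at hG
    exact (GRat_ne_zero hd2 hm) hG.symm
  have h1 : vRF x (toRF G) = vz x G := vRF_toRF x hGne
  rw [← h1, hG, GRat]
  by_cases hcase : n ∣ m - 1
  · rw [if_pos hcase, if_pos hcase,
      vRF_div x (FRat_ne_zero hd2 (by omega)) (FRat_ne_zero hd2 (by omega)),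
      vRF_FRat x hd2 (by omega), vRF_FRat x hd2 (by omega)]
  · rw [if_neg hcase, if_neg hcase, vRF_FRat x hd2 (by omega)]
    ring

end FRatVal

section UnitsKey

open NumberField

variable {K : Type*} [Field K] [NumberField K]

lemma bridge (c₀ : RingOfIntegers K) (p : Polynomial ℤ) :
    aeval (c₀ : K) p = algebraMap (RingOfIntegers K) K (aeval c₀ p) := by
  rw [RingOfIntegers.coe_eq_algebraMap]
  exact aeval_algebraMap_apply K c₀ p

lemma bridge_ne_zero (c₀ : RingOfIntegers K) {p : Polynomial ℤ}
    (h : aeval c₀ p ≠ 0) : aeval (c₀ : K) p ≠ 0 := by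
  rw [bridge]
  intro h0
  exact h (RingOfIntegers.coe_injective (by
    rw [h0, map_zero]))

lemma bridge_eq (c₀ : RingOfIntegers K) {p : Polynomial ℤ}
    (h : aeval (c₀ : K) p = 0) : aeval c₀ p = 0 := by
  by_contra h0
  exact bridge_ne_zero c₀ h0 h

/-- orders of vanishing vanish off the orbit collisions. -/
lemma Wv_zero (c₀ : RingOfIntegers K) {d : ℕ} (hd2 : 2 ≤ d) {s j : ℕ} (hj : 1 ≤ j)
    (hne : av d c₀ (s + j) ≠ av d c₀ s) : Wv (c₀ : K) d s j = 0 := by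
  apply vz_eq_zero _ (critPoly_diff_ne_zero hd2 s hj)
  apply bridge_ne_zero
  rw [map_sub]
  intro h0
  exact hne (sub_eq_zero.mp h0)

/-- **Core lemma**: at a root of `G_{d,m,n}` with `m ≥ 2`, the orbit values at proper
divisors of `n` are units in the ring of integers. -/
lemma units_key (c₀ : RingOfIntegers K) {d m n : ℕ}
    (hd2 : 2 ≤ d) (hm : 2 ≤ m) (hn : 1 ≤ n) {G : Polynomial ℤ}
    (hG : toRF G = GRat d m n) (hroot : aeval (c₀ : K) G = 0) :
    ∀ e₁ ∈ n.divisors, e₁ ≠ n → IsUnit (av d c₀ e₁) := by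
  classical
  set x : K := (c₀ : K) with hxdef
  have hGne : G ≠ 0 := by
    intro h0
    rw [h0, toRF_zero] at hG
    exact (GRat_ne_zero hd2 hm) hG.symm
  have hvzG : 0 < vz x G := (vz_pos_iff x hGne).mpr hroot
  -- seed existence
  have hseed : ∃ s k, k ∈ n.divisors ∧ av d c₀ (s + k) = av d c₀ s := by
    by_contra hno
    push_neg at hno
    have hT : ∀ s, Tv x d n s = 0 := by
      intro s
      rw [Tv]
      apply Finset.sum_eq_zero
      intro k hk
      rw [Wv_zero c₀ hd2 (Nat.pos_of_mem_divisors hk) (hno s k hk)]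
      simp
    have hform := vz_G_formula x hd2 hm hG
    rw [hT, hT, hT, hT] at hform
    simp at hform
    omega
  obtain ⟨s₀, k₀, hk₀mem, hseedEq⟩ := hseed
  have hk₀1 : 1 ≤ k₀ := Nat.pos_of_mem_divisors hk₀mem
  intro e₁ he₁mem he₁ne
  by_contra hunit
  have hspan : Ideal.span {av d c₀ e₁} ≠ ⊤ := by
    rw [Ne, Ideal.span_singleton_eq_top]; exact hunit
  obtain ⟨P, hPmax, hPle⟩ := Ideal.exists_le_maximal _ hspan
  have hPne : P ≠ ⊤ := hPmax.ne_top
  have he₁P : av d c₀ e₁ ∈ P := hPle (Ideal.subset_span rfl)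
  -- entry point
  have hex : ∃ i, 1 ≤ i ∧ av d c₀ i ∈ P := ⟨e₁, Nat.pos_of_mem_divisors he₁mem, he₁P⟩
  set e := Nat.find hex with hedef
  have he1 : 1 ≤ e := (Nat.find_spec hex).1
  have heP : av d c₀ e ∈ P := (Nat.find_spec hex).2
  have hentry : ∀ i, 1 ≤ i → av d c₀ i ∈ P → e ∣ i := by
    intro i
    induction i using Nat.strong_induction_on with
    | _ i ih =>
      intro hi1 hiP
      have hei : e ≤ i := Nat.find_min' hex ⟨hi1, hiP⟩
      rcases Nat.eq_or_lt_of_le hei with heq | hlt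
      · exact heq ▸ dvd_refl e
      · have hsub1 : 1 ≤ i - e := by omega
        have hdiff : av d c₀ e ∣ av d c₀ (e + (i - e)) - av d c₀ (i - e) :=
          av_dvd_diff c₀ e (i - e)
        have hei2 : e + (i - e) = i := by omega
        rw [hei2] at hdiff
        obtain ⟨w, hw⟩ := hdiff
        have hmem : av d c₀ i - av d c₀ (i - e) ∈ P := by
          rw [hw]; exact P.mul_mem_right _ heP
        have hsubP : av d c₀ (i - e) ∈ P := by
          have := P.sub_mem hiP hmem
          simpa using this
        have := ih (i - e) (by omega) hsub1 hsubP
        obtain ⟨t, ht⟩ := this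
        exact ⟨t + 1, by rw [Nat.mul_succ]; omega⟩
  have hedvd_e₁ : e ∣ e₁ := hentry e₁ (Nat.pos_of_mem_divisors he₁mem) he₁P
  have hedvdn : e ∣ n := hedvd_e₁.trans (Nat.mem_divisors.mp he₁mem).1
  have he_ne_n : e ≠ n := by
    have h1 : e ≤ e₁ := Nat.le_of_dvd (Nat.pos_of_mem_divisors he₁mem) hedvd_e₁
    have h2 : e₁ ≤ n := Nat.le_of_dvd (by omega) (Nat.mem_divisors.mp he₁mem).1
    omega
  -- period descends to e at s₀
  have hdesc : av d c₀ (s₀ + e) = av d c₀ s₀ :=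
    av_period_descend c₀ hPne hd2 he1 heP hk₀1 hseedEq
  -- exact tail M and exact period E
  have hMex : ∃ s, ∃ p, 1 ≤ p ∧ av d c₀ (s + p) = av d c₀ s := ⟨s₀, k₀, hk₀1, hseedEq⟩
  set M := Nat.find hMex with hMdef
  have hEex : ∃ p, 1 ≤ p ∧ av d c₀ (M + p) = av d c₀ M := Nat.find_spec hMex
  set E := Nat.find hEex with hEdef
  have hE1 : 1 ≤ E := (Nat.find_spec hEex).1
  have hME : av d c₀ (M + E) = av d c₀ M := (Nat.find_spec hEex).2
  have hEmin : ∀ p, 1 ≤ p → av d c₀ (M + p) = av d c₀ M → E ≤ p :=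
    fun p h1 h2 => Nat.find_min' hEex ⟨h1, h2⟩
  have hMmin : ∀ s p, 1 ≤ p → av d c₀ (s + p) = av d c₀ s → M ≤ s :=
    fun s p h1 h2 => Nat.find_min' hMex ⟨p, h1, h2⟩
  -- E = e
  have hMle : M ≤ s₀ := hMmin s₀ k₀ hk₀1 hseedEq
  have hEdvde : E ∣ e := av_period_dvd c₀ hME hE1 hEmin s₀ e hMle he1 hdesc
  have hedvdE : e ∣ E := by
    have hiM : M ≤ e * (M + 1) := by
      calc M ≤ M + 1 := by omega
      _ ≤ e * (M + 1) := Nat.le_mul_of_pos_left _ (by omega)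
    have hiP : av d c₀ (e * (M + 1)) ∈ P := av_mem_of_dvd c₀ heP ⟨M + 1, rfl⟩
    have hiEP : av d c₀ (e * (M + 1) + E) ∈ P := by
      rw [perE c₀ hME _ hiM]; exact hiP
    have hdvd2 : e ∣ e * (M + 1) + E := hentry _ (by omega) hiEP
    exact (Nat.dvd_add_right ⟨M + 1, rfl⟩).mp hdvd2
  have hEe : E = e := Nat.dvd_antisymm hEdvde hedvdE
  -- the weight formula
  have hW : ∀ s, ∀ k ∈ n.divisors,
      (Wv x d s k : ℤ) = if e ∣ k then (Wv x d s e : ℤ) else 0 := by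
    intro s k hk
    have hk1 : 1 ≤ k := Nat.pos_of_mem_divisors hk
    by_cases hek : e ∣ k
    · rw [if_pos hek]
      obtain ⟨q, rfl⟩ := hek
      have hq1 : 1 ≤ q := by
        rcases Nat.eq_zero_or_pos q with rfl | h
        · omega
        · exact h
      have htel := critPoly_telescope (d := d) e s q
      have hsig_val : aeval c₀ (Sig d e s q) ∉ P := sig_not_mem c₀ hPne hd2 he1 heP hq1 s
      have hsigOK : aeval c₀ (Sig d e s q) ≠ 0 := by
        intro h0; exact hsig_val (h0 ▸ P.zero_mem)
      have hsigne : Sig d e s q ≠ 0 := by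
        intro h0; rw [h0] at hsigOK; simp at hsigOK
      have hsigK : aeval x (Sig d e s q) ≠ 0 := bridge_ne_zero c₀ hsigOK
      have hvzsig : vz x (Sig d e s q) = 0 := vz_eq_zero x hsigne hsigK
      have hcalc : Wv x d s (e * q) = Wv x d s e + vz x (Sig d e s q) := by
        rw [Wv, Wv, htel, vz_mul x (critPoly_diff_ne_zero hd2 s he1) hsigne]
      rw [hcalc, hvzsig]
      simp
    · rw [if_neg hek]
      have hne : av d c₀ (s + k) ≠ av d c₀ s := by
        intro heq
        have hMs : M ≤ s := hMmin s k hk1 heq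
        have hdvd : E ∣ k := av_period_dvd c₀ hME hE1 hEmin s k hMs hk1 heq
        rw [hEe] at hdvd
        exact hek hdvd
      rw [Wv_zero c₀ hd2 hk1 hne]
      simp
  have hT : ∀ s, Tv x d n s = 0 := fun s => Tsum_zero hn hedvdn he_ne_n _ _ (hW s)
  have hform := vz_G_formula x hd2 hm hG
  rw [hT, hT, hT, hT] at hform
  simp at hform
  omega

end UnitsKey

section Assembly

lemma isUnit_finset_prod {M : Type*} [CommMonoid M] {ι : Type*} (S : Finset ι) (f : ι → M)
    (h : ∀ i ∈ S, IsUnit (f i)) : IsUnit (∏ i ∈ S, f i) := by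
  classical
  induction S using Finset.cons_induction with
  | empty => simpa using isUnit_one
  | cons a s ha ih =>
    rw [Finset.prod_cons]
    exact (h a (Finset.mem_cons_self a s)).mul
      (ih (fun i hi => h i (Finset.mem_cons_of_mem hi)))

lemma zpow_clear {F : Type*} [Field F] {ι : Type*} (S : Finset ι) (x : ι → F)
    (hx : ∀ i ∈ S, x i ≠ 0) (μ : ι → ℤ) :
    (∏ i ∈ S, x i ^ μ i) * ∏ i ∈ S, x i ^ ((-μ i).toNat)
      = ∏ i ∈ S, x i ^ ((μ i).toNat) := by
  rw [← Finset.prod_mul_distrib]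
  apply Finset.prod_congr rfl
  intro i hi
  rw [← zpow_natCast (x i) ((-μ i).toNat), ← zpow_add₀ (hx i hi),
    ← zpow_natCast (x i) ((μ i).toNat)]
  congr 1
  omega

lemma toRF_prod {ι : Type*} (S : Finset ι) (f : ι → Polynomial ℤ) :
    toRF (∏ i ∈ S, f i) = ∏ i ∈ S, toRF (f i) :=
  map_prod (algebraMap (Polynomial ℤ) RF) f S

lemma toRF_pow (p : Polynomial ℤ) (k : ℕ) : toRF (p ^ k) = toRF p ^ k :=
  map_pow (algebraMap (Polynomial ℤ) RF) p k

/-- the cleared-denominator form of `hG0`. -/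
lemma G0_poly_identity {d n : ℕ} (hd2 : 2 ≤ d) (hn : 1 ≤ n) {G0 : Polynomial ℤ}
    (hG0 : toRF G0 = G0Rat d n) :
    G0 * ∏ k ∈ n.divisors, critPoly d k ^ ((-(ArithmeticFunction.moebius (n/k))).toNat)
      = ∏ k ∈ n.divisors, critPoly d k ^ ((ArithmeticFunction.moebius (n/k)).toNat) := by
  apply toRF_injective
  rw [toRF_mul, toRF_prod, toRF_prod]
  simp only [toRF_pow]
  rw [hG0, G0Rat]
  exact zpow_clear n.divisors (fun k => toRF (critPoly d k))
    (fun k hk => toRF_ne_zero (critPoly_ne_zero hd2 (Nat.pos_of_mem_divisors hk))) _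

lemma av_iterate {R : Type*} [CommRing R] [IsDomain R] (d : ℕ) (c : R) :
    ∀ i, (fun x => x ^ d + c)^[i] 0 = av d c i := by
  intro i
  induction i with
  | zero => rw [Function.iterate_zero_apply, av_zero]
  | succ i ih =>
    rw [Function.iterate_succ_apply', ih, av_succ]

end Assembly
end MisAux



open MisAux

/-- Let `d` be a prime, `m ≥ 2`, `n ≥ 1`, and `c₀` a root of `G_{d,m,n}`,
with `K = ℚ(c₀)` and `a_n = f_{c₀,d}^n(0) ∈ O_K`. Then `a_n = G_{d,0,n}(c₀)·u` for some
unit `u` of `O_K`. -/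
theorem orbit_eq_G0_mul_unit (d m n : ℕ) (hd : d.Prime) (hm : 2 ≤ m) (hn : 1 ≤ n)
    (G G0 : Polynomial ℤ) (hG : IsMisiurewicz d m n G) (hG0 : IsG0 d n G0)
    (K : Type*) [Field K] [NumberField K] (c₀ : NumberField.RingOfIntegers K)
    (hroot : Polynomial.aeval (c₀ : K) G = 0)
    (hgen : Algebra.adjoin ℚ {(c₀ : K)} = ⊤) :
    ∃ u : (NumberField.RingOfIntegers K)ˣ,
      (fun x => x ^ d + c₀)^[n] 0 = Polynomial.aeval c₀ G0 * u := by

  classical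
  have hd2 : 2 ≤ d := hd.two_le
  have hG' : toRF G = GRat d m n := hG
  have hG0' : toRF G0 = G0Rat d n := hG0
  -- units at proper divisors
  have hu : ∀ k ∈ n.divisors, k ≠ n → IsUnit (av d c₀ k) :=
    units_key c₀ hd2 hm hn hG' hroot
  -- cleared identity, evaluated at c₀
  have hpoly := G0_poly_identity hd2 hn hG0'
  have hev := congrArg (Polynomial.aeval c₀) hpoly
  rw [map_mul, map_prod, map_prod] at hev
  simp only [map_pow, ← av_def] at hev
  -- split off the k = n factor on the right
  have hnmem : n ∈ n.divisors := Nat.mem_divisors_self n (by omega)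
  have hsplit := (Finset.mul_prod_erase n.divisors
    (fun k => av d c₀ k ^ ((ArithmeticFunction.moebius (n/k)).toNat)) hnmem).symm
  have hfn : av d c₀ n ^ ((ArithmeticFunction.moebius (n/n)).toNat) = av d c₀ n := by
    rw [Nat.div_self (by omega), ArithmeticFunction.moebius_apply_one]
    norm_num
  rw [hfn] at hsplit
  rw [hsplit] at hev
  -- unit components
  have hU1 : IsUnit (∏ k ∈ n.divisors,
      av d c₀ k ^ ((-(ArithmeticFunction.moebius (n/k))).toNat)) := by
    apply isUnit_finset_prod
    intro k hk
    by_cases hkn : k = n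
    · subst hkn
      rw [Nat.div_self (by omega), ArithmeticFunction.moebius_apply_one,
        show ((-1 : ℤ)).toNat = 0 from rfl, pow_zero]
      exact isUnit_one
    · exact (hu k hk hkn).pow _
  have hU2 : IsUnit (∏ k ∈ n.divisors.erase n,
      av d c₀ k ^ ((ArithmeticFunction.moebius (n/k)).toNat)) := by
    apply isUnit_finset_prod
    intro k hk
    obtain ⟨hkne, hkmem⟩ := Finset.mem_erase.mp hk
    exact (hu k hkmem hkne).pow _
  obtain ⟨u1, hu1⟩ := hU1
  obtain ⟨u2, hu2⟩ := hU2
  rw [← hu1, ← hu2] at hev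
  -- hev : aeval c₀ G0 * ↑u1 = av d c₀ n * ↑u2
  refine ⟨u1 * u2⁻¹, ?_⟩
  rw [av_iterate d c₀ n]
  calc av d c₀ n = av d c₀ n * ↑u2 * ↑u2⁻¹ := by
        rw [mul_assoc, Units.mul_inv, mul_one]
  _ = Polynomial.aeval c₀ G0 * ↑u1 * ↑u2⁻¹ := by rw [← hev]
  _ = Polynomial.aeval c₀ G0 * ↑(u1 * u2⁻¹) := by
        rw [Units.val_mul, mul_assoc]
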